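/- arXiv:2106.07707 — 6 statements merged into one kernel-verified Lean document; each statement's English description precedes it below -/
import Mathlib

section
/- Let ⟨A,∧,∨,→,∼,1⟩ be a Nelson algebra. Then for all x,y in A: x∧∼(x∧∼y) = x∧(x↣y), where x↣y:=(x→y)∧(∼y→∼x). -/
/-- A Nelson algebra ⟨A,∧,∨,→,∼,1⟩ of type (2,2,2,1,0). -/
structure NelsonAlgebra (A : Type*) where
  meet : A → A → A
  join : A → A → A
  imp : A → A → A
  neg : A → A
  one : A
  n1 : ∀ x y, meet x (join x y) = x
  n2 : ∀ x y z, meet x (join y z) = join (meet z x) (meet y x)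
  n3 : ∀ x, neg (neg x) = x
  n4 : ∀ x y, neg (meet x y) = join (neg x) (neg y)
  n5 : ∀ x y, meet x (neg x) = meet (meet x (neg x)) (join y (neg y))
  n6 : ∀ x, imp x x = one
  n7 : ∀ x y, meet x (imp x y) = meet x (join (neg x) y)
  n8 : ∀ x y z, imp (meet x y) z = imp x (imp y z)

/-- The weak implication x↣y := (x→y)∧(∼y→∼x). -/
def NelsonAlgebra.wimp {A : Type*} (N : NelsonAlgebra A) (x y : A) : A :=
  N.meet (N.imp x y) (N.imp (N.neg y) (N.neg x))

namespace NelsonAlgebra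

variable {A : Type*} (N : NelsonAlgebra A)

/-! ### Lattice theory from Sholander's axioms N1, N2 -/

lemma p1 (x : A) : N.join (N.meet x x) (N.meet x x) = x := by
  have h2 := N.n2 x x x
  rw [N.n1 x x] at h2
  exact h2.symm

lemma p2 (x : A) : N.meet (N.meet x x) x = N.meet x x := by
  have h := N.n1 (N.meet x x) (N.meet x x)
  rw [N.p1 x] at h
  exact h

lemma mi (x : A) : N.meet x x = x := by
  have h := N.n2 x (N.meet x x) (N.meet x x)
  rw [N.p1 x, N.p2 x, N.p1 x] at h
  exact h

lemma ji (x : A) : N.join x x = x := by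
  have h := N.p1 x
  rw [N.mi x] at h
  exact h

lemma mc (x y : A) : N.meet x y = N.meet y x := by
  have h := N.n2 x y y
  rw [N.ji y, N.ji (N.meet y x)] at h
  exact h

lemma q2 (b a : A) : N.join (N.meet b a) a = a := by
  have h := N.n2 a a b
  rw [N.n1 a b, N.mi a] at h
  exact h.symm

lemma n1c (x y : A) : N.meet (N.join x y) x = x := by
  rw [N.mc, N.n1]

lemma rlem (y z : A) : N.join y z = N.join (N.join z (N.meet y z)) y := by
  have h := N.n2 (N.join y z) y z
  rw [N.mi (N.join y z), N.n1 y z] at h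
  have h2 := N.n2 z y z
  rw [N.mi z] at h2
  rw [h2] at h
  exact h

lemma abs2 (a b : A) : N.meet a (N.join b a) = a := by
  calc N.meet a (N.join b a)
      = N.meet a (N.join (N.join a (N.meet b a)) b) := by rw [← N.rlem b a]
    _ = N.join (N.meet b a) (N.meet (N.join a (N.meet b a)) a) := N.n2 a _ b
    _ = N.join (N.meet b a) a := by rw [N.n1c a (N.meet b a)]
    _ = a := N.q2 b a

lemma jc (y z : A) : N.join y z = N.join z y := by
  have h := N.n2 (N.join y z) y z
  rw [N.mi (N.join y z), N.n1 y z, N.abs2 z y] at h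
  exact h

lemma absJ2 (a b : A) : N.join a (N.meet b a) = a := by
  rw [N.jc]; exact N.q2 b a

lemma absJ1 (a b : A) : N.join a (N.meet a b) = a := by
  rw [N.mc a b]; exact N.absJ2 a b

lemma absJ3 (a b : A) : N.join (N.meet a b) b = b := N.q2 a b

lemma D (x y z : A) : N.meet x (N.join y z) = N.join (N.meet x y) (N.meet x z) := by
  rw [N.n2 x y z, N.mc z x, N.mc y x, N.jc]

lemma jassoc (a b c : A) : N.join (N.join a b) c = N.join a (N.join b c) := by
  set L := N.join (N.join a b) c with hL
  set R := N.join a (N.join b c) with hR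
  have hRa : N.meet R a = a := by rw [N.mc, hR, N.n1]
  have hRb : N.meet R b = b := by
    rw [N.mc, hR, N.D b a (N.join b c), N.n1 b c, N.mc b a]
    exact N.q2 a b
  have hRc : N.meet R c = c := by
    rw [N.mc, hR, N.D c a (N.join b c), N.abs2 c b, N.mc c a]
    exact N.q2 a c
  have h1 : N.meet R L = L := by
    rw [hL, N.D R (N.join a b) c, N.D R a b, hRa, hRb, hRc]
  have hLa : N.meet L a = a := by
    rw [N.mc, hL, N.D a (N.join a b) c, N.n1 a b, N.absJ1 a c]
  have hLb : N.meet L b = b := by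
    rw [N.mc, hL, N.D b (N.join a b) c, N.abs2 b a, N.absJ1 b c]
  have hLc : N.meet L c = c := by
    rw [N.mc, hL, N.abs2 c (N.join a b)]
  have h2 : N.meet L R = R := by
    rw [hR, N.D L a (N.join b c), N.D L b c, hLa, hLb, hLc]
  calc L = N.meet R L := h1.symm
    _ = N.meet L R := N.mc R L
    _ = R := h2

lemma Dj (x y z : A) : N.join x (N.meet y z) = N.meet (N.join x y) (N.join x z) := by
  have h : N.meet (N.join x y) (N.join x z) = N.join x (N.meet y z) := calc
    N.meet (N.join x y) (N.join x z)
      = N.join (N.meet (N.join x y) x) (N.meet (N.join x y) z) := N.D _ x z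
    _ = N.join x (N.meet z (N.join x y)) := by rw [N.n1c, N.mc (N.join x y) z]
    _ = N.join x (N.join (N.meet z x) (N.meet z y)) := by rw [N.D z x y]
    _ = N.join (N.join x (N.meet z x)) (N.meet z y) := (N.jassoc _ _ _).symm
    _ = N.join x (N.meet z y) := by rw [N.absJ2 x z]
    _ = N.join x (N.meet y z) := by rw [N.mc z y]
  exact h.symm

lemma massoc (a b c : A) : N.meet (N.meet a b) c = N.meet a (N.meet b c) := by
  set L := N.meet (N.meet a b) c with hL
  set R := N.meet a (N.meet b c) with hR
  have hRa : N.join R a = a := by rw [N.jc, hR, N.absJ1]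
  have hRb : N.join R b = b := by
    rw [N.jc, hR, N.Dj b a (N.meet b c), N.absJ1 b c, N.mc (N.join b a) b, N.n1 b a]
  have hRc : N.join R c = c := by
    rw [N.jc, hR, N.Dj c a (N.meet b c), N.absJ2 c b, N.mc (N.join c a) c, N.n1 c a]
  have h1 : N.join R L = L := by
    rw [hL, N.Dj R (N.meet a b) c, N.Dj R a b, hRa, hRb, hRc]
  have hLa : N.join L a = a := by
    rw [N.jc, hL, N.Dj a (N.meet a b) c, N.absJ1 a b, N.n1 a c]
  have hLb : N.join L b = b := by
    rw [N.jc, hL, N.Dj b (N.meet a b) c, N.absJ2 b a, N.n1 b c]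
  have hLc : N.join L c = c := by
    rw [N.jc, hL, N.absJ2 c (N.meet a b)]
  have h2 : N.join L R = R := by
    rw [hR, N.Dj L a (N.meet b c), N.Dj L b c, hLa, hLb, hLc]
  calc L = N.join R L := h1.symm
    _ = N.join L R := N.jc R L
    _ = R := h2

/-! ### Basic facts about negation and implication -/

lemma top (x : A) : N.meet x N.one = x := by
  calc N.meet x N.one
      = N.meet x (N.imp x x) := by rw [N.n6 x]
    _ = N.meet x (N.join (N.neg x) x) := N.n7 x x
    _ = x := N.abs2 x (N.neg x)

lemma imp_one (x : A) : N.imp x N.one = N.one := by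
  calc N.imp x N.one
      = N.imp x (N.imp x x) := by rw [N.n6 x]
    _ = N.imp (N.meet x x) x := (N.n8 x x x).symm
    _ = N.imp x x := by rw [N.mi x]
    _ = N.one := N.n6 x

lemma L5 (a b : A) : N.imp (N.meet a b) b = N.one := by
  rw [N.n8 a b b, N.n6 b, N.imp_one a]

lemma le_imp {a b : A} (h : N.meet a b = a) : N.imp a b = N.one := by
  rw [← h]; exact N.L5 a b

lemma cle (a b : A) : N.meet (N.meet a (N.neg a)) (N.imp a b) = N.meet a (N.neg a) := by
  calc N.meet (N.meet a (N.neg a)) (N.imp a b)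
      = N.meet (N.meet (N.neg a) a) (N.imp a b) := by rw [N.mc a (N.neg a)]
    _ = N.meet (N.neg a) (N.meet a (N.imp a b)) := N.massoc _ _ _
    _ = N.meet (N.neg a) (N.meet a (N.join (N.neg a) b)) := by rw [N.n7 a b]
    _ = N.meet (N.meet (N.neg a) a) (N.join (N.neg a) b) := (N.massoc _ _ _).symm
    _ = N.meet (N.meet a (N.neg a)) (N.join (N.neg a) b) := by rw [N.mc (N.neg a) a]
    _ = N.meet a (N.meet (N.neg a) (N.join (N.neg a) b)) := N.massoc _ _ _
    _ = N.meet a (N.neg a) := by rw [N.n1 (N.neg a) b]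

lemma S1 (a b : A) : N.imp (N.meet a (N.neg a)) b = N.one := by
  set c := N.meet a (N.neg a) with hc
  have nc : N.neg c = N.join (N.neg a) a := by
    rw [hc, N.n4 a (N.neg a), N.n3 a]
  have mcc : N.meet c (N.neg c) = c := by
    rw [nc, hc, N.massoc a (N.neg a) (N.join (N.neg a) a), N.n1 (N.neg a) a]
  have step1 : N.meet (N.neg c) (N.imp (N.neg c) b) = N.meet (N.neg c) (N.join c b) := by
    rw [N.n7 (N.neg c) b, N.n3 c]
  have step2 : N.meet c (N.imp (N.neg c) b) = c := by
    calc N.meet c (N.imp (N.neg c) b)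
        = N.meet (N.meet c (N.neg c)) (N.imp (N.neg c) b) := by rw [mcc]
      _ = N.meet c (N.meet (N.neg c) (N.imp (N.neg c) b)) := N.massoc _ _ _
      _ = N.meet c (N.meet (N.neg c) (N.join c b)) := by rw [step1]
      _ = N.meet (N.meet c (N.neg c)) (N.join c b) := (N.massoc _ _ _).symm
      _ = N.meet c (N.join c b) := by rw [mcc]
      _ = c := N.n1 c b
  calc N.imp c b
      = N.imp (N.meet c (N.neg c)) b := by rw [mcc]
    _ = N.imp c (N.imp (N.neg c) b) := N.n8 c (N.neg c) b
    _ = N.one := N.le_imp step2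

lemma M1 (a b : A) : N.meet (N.neg a) (N.imp a b) = N.neg a := by
  set t := N.imp a b with ht
  have h1 : N.imp (N.neg a) t = N.one := by
    rw [ht, ← N.n8 (N.neg a) a b, N.mc (N.neg a) a]
    exact N.S1 a b
  have h2 : N.meet (N.neg a) (N.join a t) = N.neg a := by
    have := N.n7 (N.neg a) t
    rw [h1, N.top (N.neg a), N.n3 a] at this
    exact this.symm
  have hc : N.meet (N.meet (N.neg a) a) (N.meet (N.neg a) t) = N.meet (N.neg a) a := by
    calc N.meet (N.meet (N.neg a) a) (N.meet (N.neg a) t)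
        = N.meet (N.meet (N.meet (N.neg a) a) (N.neg a)) t := (N.massoc _ _ _).symm
      _ = N.meet (N.meet (N.neg a) (N.meet a (N.neg a))) t := by
            rw [N.massoc (N.neg a) a (N.neg a)]
      _ = N.meet (N.meet (N.neg a) (N.meet (N.neg a) a)) t := by rw [N.mc a (N.neg a)]
      _ = N.meet (N.meet (N.meet (N.neg a) (N.neg a)) a) t := by
            rw [N.massoc (N.neg a) (N.neg a) a]
      _ = N.meet (N.meet (N.neg a) a) t := by rw [N.mi (N.neg a)]
      _ = N.meet (N.meet a (N.neg a)) t := by rw [N.mc (N.neg a) a]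
      _ = N.meet a (N.neg a) := N.cle a b
      _ = N.meet (N.neg a) a := N.mc a (N.neg a)
  have h4 : N.join (N.meet (N.neg a) a) (N.meet (N.neg a) t) = N.meet (N.neg a) t := by
    rw [← hc]
    exact N.q2 _ _
  calc N.meet (N.neg a) t
      = N.join (N.meet (N.neg a) a) (N.meet (N.neg a) t) := h4.symm
    _ = N.meet (N.neg a) (N.join a t) := (N.D (N.neg a) a t).symm
    _ = N.neg a := h2

lemma L1 {d a : A} (h : N.meet d a = d) (b : A) :
    N.meet d (N.imp a b) = N.meet d (N.join (N.neg a) b) := by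
  calc N.meet d (N.imp a b)
      = N.meet (N.meet d a) (N.imp a b) := by rw [h]
    _ = N.meet d (N.meet a (N.imp a b)) := N.massoc _ _ _
    _ = N.meet d (N.meet a (N.join (N.neg a) b)) := by rw [N.n7 a b]
    _ = N.meet (N.meet d a) (N.join (N.neg a) b) := (N.massoc _ _ _).symm
    _ = N.meet d (N.join (N.neg a) b) := by rw [h]

end NelsonAlgebra

theorem nelson_B3 {A : Type*} (N : NelsonAlgebra A) (x y : A) :
    N.meet x (N.neg (N.meet x (N.neg y))) = N.meet x (N.wimp x y) := by
  set w := N.imp (N.neg y) (N.neg x) with hw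
  have yw : N.meet y w = y := by
    have := N.M1 (N.neg y) (N.neg x)
    rw [N.n3 y] at this
    exact this
  -- Claim a : (x∧y)∧w = x∧y
  have claimA : N.meet (N.meet x y) w = N.meet x y := by
    rw [N.massoc x y w, yw]
  -- Claim b : (x∧∼x)∧w = x∧∼x
  have claimB : N.meet (N.meet x (N.neg x)) w = N.meet x (N.neg x) := by
    set c := N.meet x (N.neg x) with hcdef
    have hcx : N.meet c (N.neg x) = c := by
      rw [hcdef, N.massoc x (N.neg x) (N.neg x), N.mi (N.neg x)]
    have t1 : N.meet (N.meet c y) w = N.meet c y := by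
      rw [N.massoc c y w, yw]
    have hd : N.meet (N.meet c (N.neg y)) (N.neg y) = N.meet c (N.neg y) := by
      rw [N.massoc c (N.neg y) (N.neg y), N.mi (N.neg y)]
    have hdx : N.meet (N.meet c (N.neg y)) (N.neg x) = N.meet c (N.neg y) := by
      calc N.meet (N.meet c (N.neg y)) (N.neg x)
          = N.meet (N.meet (N.neg y) c) (N.neg x) := by rw [N.mc c (N.neg y)]
        _ = N.meet (N.neg y) (N.meet c (N.neg x)) := N.massoc _ _ _
        _ = N.meet (N.neg y) c := by rw [hcx]
        _ = N.meet c (N.neg y) := N.mc _ _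
    have t2 : N.meet (N.meet c (N.neg y)) w = N.meet c (N.neg y) := by
      calc N.meet (N.meet c (N.neg y)) w
          = N.meet (N.meet c (N.neg y)) (N.join (N.neg (N.neg y)) (N.neg x)) :=
            N.L1 hd (N.neg x)
        _ = N.meet (N.meet c (N.neg y)) (N.join y (N.neg x)) := by rw [N.n3 y]
        _ = N.join (N.meet (N.meet c (N.neg y)) y) (N.meet (N.meet c (N.neg y)) (N.neg x)) :=
            N.D _ y (N.neg x)
        _ = N.join (N.meet (N.meet c (N.neg y)) y) (N.meet c (N.neg y)) := by rw [hdx]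
        _ = N.join (N.meet y (N.meet c (N.neg y))) (N.meet c (N.neg y)) := by
            rw [N.mc (N.meet c (N.neg y)) y]
        _ = N.meet c (N.neg y) := N.q2 y (N.meet c (N.neg y))
    have hc5 : c = N.meet c (N.join y (N.neg y)) := by
      rw [hcdef]; exact N.n5 x y
    calc N.meet c w
        = N.meet (N.meet c (N.join y (N.neg y))) w := by rw [← hc5]
      _ = N.meet (N.join (N.meet c y) (N.meet c (N.neg y))) w := by rw [N.D c y (N.neg y)]
      _ = N.meet w (N.join (N.meet c y) (N.meet c (N.neg y))) := N.mc _ _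
      _ = N.join (N.meet w (N.meet c y)) (N.meet w (N.meet c (N.neg y))) := N.D _ _ _
      _ = N.join (N.meet (N.meet c y) w) (N.meet (N.meet c (N.neg y)) w) := by
          rw [N.mc w (N.meet c y), N.mc w (N.meet c (N.neg y))]
      _ = N.join (N.meet c y) (N.meet c (N.neg y)) := by rw [t1, t2]
      _ = N.meet c (N.join y (N.neg y)) := (N.D c y (N.neg y)).symm
      _ = c := hc5.symm
  have lhs : N.neg (N.meet x (N.neg y)) = N.join (N.neg x) y := by
    rw [N.n4 x (N.neg y), N.n3 y]
  have key : N.meet (N.meet x (N.join (N.neg x) y)) w = N.meet x (N.join (N.neg x) y) := by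
    calc N.meet (N.meet x (N.join (N.neg x) y)) w
        = N.meet (N.join (N.meet x (N.neg x)) (N.meet x y)) w := by rw [N.D x (N.neg x) y]
      _ = N.meet w (N.join (N.meet x (N.neg x)) (N.meet x y)) := N.mc _ _
      _ = N.join (N.meet w (N.meet x (N.neg x))) (N.meet w (N.meet x y)) := N.D _ _ _
      _ = N.join (N.meet (N.meet x (N.neg x)) w) (N.meet (N.meet x y) w) := by
          rw [N.mc w (N.meet x (N.neg x)), N.mc w (N.meet x y)]
      _ = N.join (N.meet x (N.neg x)) (N.meet x y) := by rw [claimB, claimA]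
      _ = N.meet x (N.join (N.neg x) y) := (N.D x (N.neg x) y).symm
  calc N.meet x (N.neg (N.meet x (N.neg y)))
      = N.meet x (N.join (N.neg x) y) := by rw [lhs]
    _ = N.meet (N.meet x (N.join (N.neg x) y)) w := key.symm
    _ = N.meet (N.meet x (N.imp x y)) w := by rw [← N.n7 x y]
    _ = N.meet x (N.meet (N.imp x y) w) := N.massoc _ _ _
    _ = N.meet x (N.wimp x y) := by rw [NelsonAlgebra.wimp, hw]
end

section
/- Let ⟨A,∧,∨,→,∼,1⟩ be a Nelson algebra. Then for all x,y in A: ∼(∼x∧y)↣(x↣y) = x↣y, where x↣y:=(x→y)∧(∼y→∼x). -/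
section NelsonDev

variable {A : Type*} (N : NelsonAlgebra A)

/-! ### Raw lattice development from Sholander's axioms N1, N2 plus De Morgan N3, N4. -/

private lemma nel_mB (x : A) : N.join (N.meet x x) (N.meet x x) = x :=
  (N.n2 x x x).symm.trans (N.n1 x x)

private lemma nel_mC (x : A) : N.meet (N.meet x x) x = N.meet x x := by
  have h := N.n1 (N.meet x x) (N.meet x x)
  rwa [nel_mB] at h

private lemma nel_meet_idem (x : A) : N.meet x x = x := by
  calc N.meet x x = N.meet x (N.join (N.meet x x) (N.meet x x)) := by rw [nel_mB]
    _ = N.join (N.meet (N.meet x x) x) (N.meet (N.meet x x) x) := N.n2 x (N.meet x x) (N.meet x x)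
    _ = N.join (N.meet x x) (N.meet x x) := by rw [nel_mC]
    _ = x := nel_mB N x

private lemma nel_join_idem (x : A) : N.join x x = x := by
  have h := nel_mB N x
  rwa [nel_meet_idem] at h

private lemma nel_meet_comm (x y : A) : N.meet x y = N.meet y x := by
  have h := N.n2 x y y
  rwa [nel_join_idem, nel_join_idem] at h

private lemma nel_absorb2 (x y : A) : N.join (N.meet y x) x = x := by
  have h := N.n2 x x y
  rw [N.n1, nel_meet_idem] at h
  exact h.symm

private lemma nel_supdef (x y : A) : N.join x y = N.neg (N.meet (N.neg x) (N.neg y)) := by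
  rw [N.n4, N.n3, N.n3]

private lemma nel_neg_sup (x y : A) : N.neg (N.join x y) = N.meet (N.neg x) (N.neg y) := by
  rw [nel_supdef, N.n3]

private lemma nel_join_comm (x y : A) : N.join x y = N.join y x := by
  rw [nel_supdef, nel_meet_comm, ← nel_supdef]

private lemma nel_distrib (x y z : A) :
    N.meet x (N.join y z) = N.join (N.meet x y) (N.meet x z) := by
  rw [N.n2, nel_meet_comm N z x, nel_meet_comm N y x, nel_join_comm]

private lemma nel_absorb2' (x y : A) : N.join x (N.meet x y) = x := by
  rw [nel_meet_comm, nel_join_comm]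
  exact nel_absorb2 N x y

private lemma nel_P1 (x y : A) : N.meet (N.meet x y) y = N.meet x y := by
  have h : N.join (N.meet x y) y = y := nel_absorb2 N y x
  have h2 := N.n1 (N.meet x y) y
  rwa [h] at h2

private lemma nel_P2 (x y : A) : N.meet (N.meet x y) x = N.meet x y := by
  rw [nel_meet_comm N x y]
  exact nel_P1 N y x

private lemma nel_c1 {x y : A} (h : N.meet x y = x) : N.join x y = y := by
  rw [← h]
  exact nel_absorb2 N y x

private lemma nel_c2 {x y : A} (h : N.join x y = y) : N.meet x y = x := by
  conv_lhs => rw [← h]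
  exact N.n1 x y

private lemma nel_dual_distrib (x y z : A) :
    N.join x (N.meet y z) = N.meet (N.join x y) (N.join x z) := by
  rw [nel_supdef N x (N.meet y z), N.n4 y z, nel_distrib, nel_neg_sup, ← nel_supdef,
    ← nel_supdef]

private lemma nel_trans {x y z : A} (h1 : N.meet x y = x) (h2 : N.meet y z = y) :
    N.meet x z = x := by
  apply nel_c2
  have hy := nel_c1 N h2
  calc N.join x z = N.join (N.meet x y) z := by rw [h1]
    _ = N.join z (N.meet x y) := nel_join_comm N _ _
    _ = N.meet (N.join z x) (N.join z y) := nel_dual_distrib N z x y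
    _ = N.meet (N.join z x) z := by rw [nel_join_comm N z y, hy]
    _ = N.meet z (N.join z x) := nel_meet_comm N _ _
    _ = z := N.n1 z x

private lemma nel_glb2 {x y z : A} (h1 : N.meet x y = x) (h2 : N.meet x z = x) :
    N.meet x (N.meet y z) = x := by
  apply nel_c2
  calc N.join x (N.meet y z) = N.meet (N.join x y) (N.join x z) := nel_dual_distrib N x y z
    _ = N.meet y (N.join x z) := by rw [nel_c1 N h1]
    _ = N.meet y z := by rw [nel_c1 N h2]

private lemma nel_meet_assoc (x y z : A) :
    N.meet (N.meet x y) z = N.meet x (N.meet y z) := by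
  have hLxy : N.meet (N.meet (N.meet x y) z) (N.meet x y) = N.meet (N.meet x y) z :=
    nel_P2 N (N.meet x y) z
  have hLz := nel_P1 N (N.meet x y) z
  have hLx := nel_trans N hLxy (nel_P2 N x y)
  have hLy := nel_trans N hLxy (nel_P1 N x y)
  have hLR : N.meet (N.meet (N.meet x y) z) (N.meet x (N.meet y z)) = N.meet (N.meet x y) z :=
    nel_glb2 N hLx (nel_glb2 N hLy hLz)
  have hRx := nel_P2 N x (N.meet y z)
  have hRyz := nel_P1 N x (N.meet y z)
  have hRy := nel_trans N hRyz (nel_P2 N y z)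
  have hRz := nel_trans N hRyz (nel_P1 N y z)
  have hRL : N.meet (N.meet x (N.meet y z)) (N.meet (N.meet x y) z) = N.meet x (N.meet y z) :=
    nel_glb2 N (nel_glb2 N hRx hRy) hRz
  calc N.meet (N.meet x y) z
      = N.meet (N.meet (N.meet x y) z) (N.meet x (N.meet y z)) := hLR.symm
    _ = N.meet (N.meet x (N.meet y z)) (N.meet (N.meet x y) z) := nel_meet_comm N _ _
    _ = N.meet x (N.meet y z) := hRL

private lemma nel_join_assoc (x y z : A) :
    N.join (N.join x y) z = N.join x (N.join y z) := by
  rw [nel_supdef N (N.join x y) z, nel_neg_sup N x y, nel_meet_assoc, ← nel_neg_sup,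
    ← nel_supdef]

end NelsonDev

/-- Type synonym carrying the lattice structure of a Nelson algebra. -/
def NelsonAlgebra.Syn {A : Type*} (_N : NelsonAlgebra A) : Type _ := A

section SynDev

variable {A : Type*} (N : NelsonAlgebra A)

local instance : Min N.Syn := ⟨N.meet⟩
local instance : Max N.Syn := ⟨N.join⟩

instance : Lattice N.Syn :=
  Lattice.mk' (nel_join_comm N) (nel_join_assoc N) (nel_meet_comm N) (nel_meet_assoc N)
    (nel_absorb2' N) (N.n1)

instance : DistribLattice N.Syn :=
  DistribLattice.ofInfSupLe fun a b c =>
    le_of_eq (show a ⊓ (b ⊔ c) = a ⊓ b ⊔ a ⊓ c from nel_distrib N a b c)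

end SynDev


private def NNeg {A : Type*} (N : NelsonAlgebra A) (x : N.Syn) : N.Syn := N.neg x
private def NImp {A : Type*} (N : NelsonAlgebra A) (x y : N.Syn) : N.Syn := N.imp x y
private def NOne {A : Type*} (N : NelsonAlgebra A) : N.Syn := N.one

section SynLemmas

variable {A : Type*} (N : NelsonAlgebra A)

private lemma nel_s6 (x : N.Syn) : NImp N x x = NOne N := N.n6 x

/-! ### Syn-typed basic lemmas -/


private lemma nel_s3 (x : N.Syn) : NNeg N (NNeg N x) = x := N.n3 x

private lemma nel_s4 (x y : N.Syn) : NNeg N (x ⊓ y) = NNeg N x ⊔ NNeg N y := N.n4 x y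

private lemma nel_s4' (x y : N.Syn) : NNeg N (x ⊔ y) = NNeg N x ⊓ NNeg N y := nel_neg_sup N x y

private lemma nel_s8 (x y z : N.Syn) : NImp N (x ⊓ y) z = NImp N x (NImp N y z) := N.n8 x y z

private lemma nel_s5 (x y : N.Syn) : x ⊓ NNeg N x ≤ y ⊔ NNeg N y := by
  have h : (x ⊓ NNeg N x) ⊓ (y ⊔ NNeg N y) = x ⊓ NNeg N x := (N.n5 x y).symm
  exact inf_eq_left.mp h

private lemma nel_neg_antitone {x y : N.Syn} (h : x ≤ y) : NNeg N y ≤ NNeg N x := by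
  have h1 : x ⊔ y = y := sup_eq_right.mpr h
  have h2 : NNeg N y = NNeg N x ⊓ NNeg N y := by
    calc NNeg N y = NNeg N (x ⊔ y) := by rw [h1]
      _ = NNeg N x ⊓ NNeg N y := nel_s4' N x y
  exact inf_eq_right.mp h2.symm

private lemma nel_le_one (x : N.Syn) : x ≤ NOne N := by
  have h1 : x ⊓ NImp N x x = x ⊓ (NNeg N x ⊔ x) := N.n7 x x
  have h2 : x ⊓ (NNeg N x ⊔ x) = x := inf_eq_left.mpr le_sup_right
  have h3 : NImp N x x = NOne N := N.n6 x
  have h : x ⊓ NOne N = x := by rw [← h3, h1, h2]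
  exact inf_eq_left.mp h

private lemma nel_inf_one (x : N.Syn) : x ⊓ NOne N = x := inf_eq_left.mpr (nel_le_one N x)

private lemma nel_imp_one (x : N.Syn) : NImp N x (NOne N) = NOne N := by
  have h : NImp N x (NOne N) = NImp N (x ⊓ x) x := by rw [nel_s8, nel_s6]
  rw [h, inf_idem, nel_s6]

private lemma nel_imp_of_le {x y : N.Syn} (h : x ≤ y) : NImp N x y = NOne N := by
  have h' : x ⊓ y = x := inf_eq_left.mpr h
  have e : NImp N x y = NImp N (x ⊓ y) y := by rw [h']
  rw [e, nel_s8, nel_s6, nel_imp_one]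

private lemma nel_s7 (x y : N.Syn) : x ⊓ NImp N x y = x ⊓ (NNeg N x ⊔ y) := N.n7 x y

private lemma nel_conv {x y : N.Syn} (h : x ≤ NNeg N x ⊔ y) : NImp N x y = NOne N := by
  have h1 : x ⊓ NImp N x y = x := by rw [nel_s7]; exact inf_eq_left.mpr h
  have h2 : NImp N x y ⊓ x = x := by rw [inf_comm]; exact h1
  calc NImp N x y = NImp N (NImp N x y ⊓ x) y := by rw [h2]
    _ = NImp N (NImp N x y) (NImp N x y) := nel_s8 N _ _ _
    _ = NOne N := nel_s6 N _

private lemma nel_le_of_imp {x y : N.Syn} (h : NImp N x y = NOne N) : x ≤ NNeg N x ⊔ y := by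
  have h1 : x ⊓ NImp N x y = x ⊓ (NNeg N x ⊔ y) := N.n7 x y
  rw [h, nel_inf_one] at h1
  exact inf_eq_left.mp h1.symm

private lemma nel_inf_le_imp (x y : N.Syn) : x ⊓ y ≤ NImp N x y := by
  have h1 : x ⊓ y ≤ x ⊓ (NNeg N x ⊔ y) := le_inf inf_le_left (le_sup_of_le_right inf_le_right)
  have h2 : x ⊓ (NNeg N x ⊔ y) = x ⊓ NImp N x y := (nel_s7 N x y).symm
  exact (h1.trans_eq h2).trans inf_le_right

private lemma nel_contrad (x y : N.Syn) : NImp N (x ⊓ NNeg N x) y = NOne N := by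
  apply nel_conv
  have e : NNeg N (x ⊓ NNeg N x) = NNeg N x ⊔ x := by rw [nel_s4, nel_s3]
  rw [e]
  exact le_sup_of_le_left (le_sup_of_le_left inf_le_right)

private lemma nel_neg_le_imp (x y : N.Syn) : NNeg N x ≤ NImp N x y := by
  have ha : x ⊓ NNeg N x ≤ NImp N x y := by
    have h1 : x ⊓ NNeg N x ≤ x ⊓ (NNeg N x ⊔ y) := le_inf inf_le_left (le_sup_of_le_left inf_le_right)
    have h2 : x ⊓ (NNeg N x ⊔ y) = x ⊓ NImp N x y := (nel_s7 N x y).symm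
    exact (h1.trans_eq h2).trans inf_le_right
  have hc : NImp N (NNeg N x) (NImp N x y) = NOne N := by
    have e : NImp N (NNeg N x) (NImp N x y) = NImp N (NNeg N x ⊓ x) y := (nel_s8 N _ _ _).symm
    rw [e, inf_comm]
    exact nel_contrad N x y
  have hd : NNeg N x ≤ x ⊔ NImp N x y := by
    have h := nel_le_of_imp N hc
    rwa [nel_s3] at h
  have he : NNeg N x = (NNeg N x ⊓ x) ⊔ (NNeg N x ⊓ NImp N x y) := by
    rw [← inf_sup_left]
    exact (inf_eq_left.mpr hd).symm
  calc NNeg N x = (NNeg N x ⊓ x) ⊔ (NNeg N x ⊓ NImp N x y) := he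
    _ ≤ NImp N x y := sup_le ((inf_comm (NNeg N x) x).le.trans ha) inf_le_right

private lemma nel_le_imp (x y : N.Syn) : y ≤ NImp N x y := by
  have hk : NImp N y (NImp N x y) = NOne N := by
    have e : NImp N y (NImp N x y) = NImp N (y ⊓ x) y := (nel_s8 N _ _ _).symm
    rw [e]
    exact nel_imp_of_le N inf_le_left
  have h1 : y ≤ NNeg N y ⊔ NImp N x y := nel_le_of_imp N hk
  have h2 : y ⊓ NNeg N y ≤ NImp N x y := by
    have h3 : y ⊓ NNeg N y ≤ (y ⊓ NNeg N y ⊓ x) ⊔ (y ⊓ NNeg N y ⊓ NNeg N x) := by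
      rw [← inf_sup_left]
      exact le_inf le_rfl (nel_s5 N y x)
    refine h3.trans (sup_le ?_ ?_)
    · exact (le_inf inf_le_right (inf_le_left.trans inf_le_left)).trans (nel_inf_le_imp N x y)
    · exact inf_le_right.trans (nel_neg_le_imp N x y)
  calc y = y ⊓ (NNeg N y ⊔ NImp N x y) := (inf_eq_left.mpr h1).symm
    _ = (y ⊓ NNeg N y) ⊔ (y ⊓ NImp N x y) := inf_sup_left _ _ _
    _ ≤ NImp N x y := sup_le h2 inf_le_right

private lemma nel_adj {x y z : N.Syn} (hy : NImp N x y = NOne N) (hz : NImp N x z = NOne N) :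
    NImp N x (y ⊓ z) = NOne N := by
  apply nel_conv
  have h := le_inf (nel_le_of_imp N hy) (nel_le_of_imp N hz)
  rwa [← sup_inf_left] at h

private lemma nel_orr {x y z : N.Syn} (hx : NImp N x z = NOne N) (hy : NImp N y z = NOne N) :
    NImp N (x ⊔ y) z = NOne N := by
  have key : ∀ u v : N.Syn, u ≤ NNeg N u ⊔ z → v ≤ NNeg N v ⊔ z →
      u ≤ (NNeg N u ⊓ NNeg N v) ⊔ z := by
    intro u v hu hv
    have hv' : v = (v ⊓ NNeg N v) ⊔ (v ⊓ z) := by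
      rw [← inf_sup_left]
      exact (inf_eq_left.mpr hv).symm
    have h1 : u ⊓ NNeg N u ≤ (u ⊓ NNeg N u ⊓ v) ⊔ (u ⊓ NNeg N u ⊓ NNeg N v) := by
      rw [← inf_sup_left]
      exact le_inf le_rfl (nel_s5 N u v)
    have h2 : u ⊓ NNeg N u ⊓ v ≤ (NNeg N u ⊓ NNeg N v) ⊔ z := by
      have e : u ⊓ NNeg N u ⊓ v = (u ⊓ NNeg N u ⊓ (v ⊓ NNeg N v)) ⊔ (u ⊓ NNeg N u ⊓ (v ⊓ z)) := by
        rw [← inf_sup_left, ← hv']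
      rw [e]
      refine sup_le ?_ ?_
      · exact le_sup_of_le_left
          (le_inf (inf_le_left.trans inf_le_right) (inf_le_right.trans inf_le_right))
      · exact le_sup_of_le_right (inf_le_right.trans inf_le_right)
    have h3 : u ⊓ NNeg N u ⊓ NNeg N v ≤ (NNeg N u ⊓ NNeg N v) ⊔ z :=
      le_sup_of_le_left (le_inf (inf_le_left.trans inf_le_right) inf_le_right)
    calc u = (u ⊓ NNeg N u) ⊔ (u ⊓ z) := by
          rw [← inf_sup_left]
          exact (inf_eq_left.mpr hu).symm
      _ ≤ (NNeg N u ⊓ NNeg N v) ⊔ z :=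
          sup_le (h1.trans (sup_le h2 h3)) (le_sup_of_le_right inf_le_right)
  apply nel_conv
  rw [nel_s4']
  refine sup_le (key x y (nel_le_of_imp N hx) (nel_le_of_imp N hy)) ?_
  refine (key y x (nel_le_of_imp N hy) (nel_le_of_imp N hx)).trans ?_
  exact sup_le_sup_right (inf_comm (NNeg N y) (NNeg N x)).le z

/-! ### The main computation -/

private lemma nel_main (x y : N.Syn) :
    NImp N (NNeg N (NNeg N x ⊓ y)) (NImp N x y ⊓ NImp N (NNeg N y) (NNeg N x)) ⊓
      NImp N (NNeg N (NImp N x y ⊓ NImp N (NNeg N y) (NNeg N x)))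
        (NNeg N (NNeg N (NNeg N x ⊓ y))) =
      NImp N x y ⊓ NImp N (NNeg N y) (NNeg N x) := by
  have ha : NNeg N (NNeg N x ⊓ y) = x ⊔ NNeg N y := by rw [nel_s4, nel_s3]
  have hna : NNeg N (x ⊔ NNeg N y) = NNeg N x ⊓ y := by rw [nel_s4', nel_s3]
  rw [ha]
  set a := x ⊔ NNeg N y with hadef
  set P := NImp N x y with hPdef
  set Q := NImp N (NNeg N y) (NNeg N x) with hQdef
  set b := P ⊓ Q with hbdef
  set R := NImp N a b with hRdef
  set S := NImp N (NNeg N b) (NNeg N a) with hSdef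
  -- basic order facts
  have hxa : x ≤ a := by rw [hadef]; exact le_sup_left
  have hnya : NNeg N y ≤ a := by rw [hadef]; exact le_sup_right
  have hbP : b ≤ P := by rw [hbdef]; exact inf_le_left
  have hbQ : b ≤ Q := by rw [hbdef]; exact inf_le_right
  have hnxP : NNeg N x ≤ P := by rw [hPdef]; exact nel_neg_le_imp N x y
  have hyP : y ≤ P := by rw [hPdef]; exact nel_le_imp N x y
  have hyQ : y ≤ Q := by
    rw [hQdef]
    have h := nel_neg_le_imp N (NNeg N y) (NNeg N x)
    rwa [nel_s3] at h
  have hnxQ : NNeg N x ≤ Q := by rw [hQdef]; exact nel_le_imp N (NNeg N y) (NNeg N x)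
  have hbR : b ≤ R := by rw [hRdef]; exact nel_le_imp N a b
  have hbS : b ≤ S := by
    rw [hSdef]
    have h := nel_neg_le_imp N (NNeg N b) (NNeg N a)
    rwa [nel_s3] at h
  have h7R : a ⊓ R = a ⊓ (NNeg N a ⊔ b) := by rw [hRdef]; exact N.n7 a b
  have h7P : x ⊓ P = x ⊓ (NNeg N x ⊔ y) := by rw [hPdef]; exact N.n7 x y
  have h7Q : NNeg N y ⊓ Q = NNeg N y ⊓ (y ⊔ NNeg N x) := by
    rw [hQdef]
    have h : NNeg N y ⊓ NImp N (NNeg N y) (NNeg N x)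
        = NNeg N y ⊓ (NNeg N (NNeg N y) ⊔ NNeg N x) := N.n7 (NNeg N y) (NNeg N x)
    rwa [nel_s3] at h
  -- R → P = 1
  have hRP : NImp N R P = NOne N := by
    rw [hPdef]
    have e : NImp N R (NImp N x y) = NImp N (R ⊓ x) y := (nel_s8 N R x y).symm
    rw [e]
    apply nel_conv
    have h_na : x ⊓ NNeg N a ≤ NNeg N x ⊔ y := by
      rw [hna]
      exact le_sup_of_le_right (inf_le_right.trans inf_le_right)
    have h_b : x ⊓ b ≤ NNeg N x ⊔ y := by
      calc x ⊓ b ≤ x ⊓ P := inf_le_inf_left x hbP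
        _ = x ⊓ (NNeg N x ⊔ y) := h7P
        _ ≤ NNeg N x ⊔ y := inf_le_right
    have hx1 : R ⊓ x ≤ NNeg N x ⊔ y := by
      have e1 : x ⊓ R = x ⊓ (NNeg N a ⊔ b) := by
        calc x ⊓ R = x ⊓ a ⊓ R := by rw [inf_eq_left.mpr hxa]
          _ = x ⊓ (a ⊓ R) := inf_assoc _ _ _
          _ = x ⊓ (a ⊓ (NNeg N a ⊔ b)) := by rw [h7R]
          _ = x ⊓ a ⊓ (NNeg N a ⊔ b) := (inf_assoc _ _ _).symm
          _ = x ⊓ (NNeg N a ⊔ b) := by rw [inf_eq_left.mpr hxa]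
      calc R ⊓ x = x ⊓ R := inf_comm _ _
        _ = (x ⊓ NNeg N a) ⊔ (x ⊓ b) := by rw [e1, inf_sup_left]
        _ ≤ NNeg N x ⊔ y := sup_le h_na h_b
    have hneg : NNeg N (R ⊓ x) = NNeg N R ⊔ NNeg N x := nel_s4 N R x
    rw [hneg]
    exact hx1.trans (sup_le (le_sup_of_le_left le_sup_right) le_sup_right)
  -- R → Q = 1
  have hRQ : NImp N R Q = NOne N := by
    rw [hQdef]
    have e : NImp N R (NImp N (NNeg N y) (NNeg N x)) = NImp N (R ⊓ NNeg N y) (NNeg N x) :=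
      (nel_s8 N R (NNeg N y) (NNeg N x)).symm
    rw [e]
    apply nel_conv
    have h_na : NNeg N y ⊓ NNeg N a ≤ y ⊔ NNeg N x := by
      rw [hna]
      exact le_sup_of_le_right (inf_le_right.trans inf_le_left)
    have h_b : NNeg N y ⊓ b ≤ y ⊔ NNeg N x := by
      calc NNeg N y ⊓ b ≤ NNeg N y ⊓ Q := inf_le_inf_left _ hbQ
        _ = NNeg N y ⊓ (y ⊔ NNeg N x) := h7Q
        _ ≤ y ⊔ NNeg N x := inf_le_right
    have hy1 : R ⊓ NNeg N y ≤ y ⊔ NNeg N x := by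
      have e1 : NNeg N y ⊓ R = NNeg N y ⊓ (NNeg N a ⊔ b) := by
        calc NNeg N y ⊓ R = NNeg N y ⊓ a ⊓ R := by rw [inf_eq_left.mpr hnya]
          _ = NNeg N y ⊓ (a ⊓ R) := inf_assoc _ _ _
          _ = NNeg N y ⊓ (a ⊓ (NNeg N a ⊔ b)) := by rw [h7R]
          _ = NNeg N y ⊓ a ⊓ (NNeg N a ⊔ b) := (inf_assoc _ _ _).symm
          _ = NNeg N y ⊓ (NNeg N a ⊔ b) := by rw [inf_eq_left.mpr hnya]
      calc R ⊓ NNeg N y = NNeg N y ⊓ R := inf_comm _ _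
        _ = (NNeg N y ⊓ NNeg N a) ⊔ (NNeg N y ⊓ b) := by rw [e1, inf_sup_left]
        _ ≤ y ⊔ NNeg N x := sup_le h_na h_b
    have hneg : NNeg N (R ⊓ NNeg N y) = NNeg N R ⊔ y := by rw [nel_s4, nel_s3]
    rw [hneg]
    exact hy1.trans (sup_le (le_sup_of_le_left le_sup_right) le_sup_right)
  -- R → b = 1
  have hRb : NImp N R b = NOne N := by rw [hbdef]; exact nel_adj N hRP hRQ
  -- key fact about ∼R
  have hkey : a ⊓ NNeg N b ≤ NNeg N a ⊔ NNeg N R := by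
    have e : NNeg N a ⊔ NNeg N R = NNeg N a ⊔ (a ⊓ NNeg N b) := by
      calc NNeg N a ⊔ NNeg N R = NNeg N (a ⊓ R) := (nel_s4 N a R).symm
        _ = NNeg N (a ⊓ (NNeg N a ⊔ b)) := by rw [h7R]
        _ = NNeg N a ⊔ NNeg N (NNeg N a ⊔ b) := nel_s4 N _ _
        _ = NNeg N a ⊔ (NNeg N (NNeg N a) ⊓ NNeg N b) := by rw [nel_s4' N (NNeg N a) b]
        _ = NNeg N a ⊔ (a ⊓ NNeg N b) := by rw [nel_s3 N a]
    rw [e]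
    exact le_sup_right
  -- ∼P → ∼R = 1
  have hPR : NImp N (NNeg N P) (NNeg N R) = NOne N := by
    apply nel_conv
    rw [nel_s3]
    have hnP : NNeg N P ≤ x ⊓ NNeg N y := by
      have h := nel_neg_antitone N (sup_le hnxP hyP)
      rwa [nel_s4', nel_s3] at h
    have hnPa : NNeg N P ≤ a := hnP.trans (inf_le_left.trans hxa)
    have hnPb : NNeg N P ≤ NNeg N b := nel_neg_antitone N hbP
    have hdec : NNeg N P ≤ NNeg N a ⊔ NNeg N R := (le_inf hnPa hnPb).trans hkey
    have hsplit : NNeg N P = (NNeg N P ⊓ NNeg N a) ⊔ (NNeg N P ⊓ NNeg N R) := by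
      rw [← inf_sup_left]
      exact (inf_eq_left.mpr hdec).symm
    have hnaP : NNeg N a ≤ P := by rw [hna]; exact inf_le_left.trans hnxP
    calc NNeg N P = (NNeg N P ⊓ NNeg N a) ⊔ (NNeg N P ⊓ NNeg N R) := hsplit
      _ ≤ P ⊔ NNeg N R :=
          sup_le (le_sup_of_le_left (inf_le_right.trans hnaP)) (le_sup_of_le_right inf_le_right)
  -- ∼Q → ∼R = 1
  have hQR : NImp N (NNeg N Q) (NNeg N R) = NOne N := by
    apply nel_conv
    rw [nel_s3]
    have hnQ : NNeg N Q ≤ NNeg N y ⊓ x := by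
      have h := nel_neg_antitone N (sup_le hyQ hnxQ)
      rwa [nel_s4', nel_s3] at h
    have hnQa : NNeg N Q ≤ a := hnQ.trans (inf_le_left.trans hnya)
    have hnQb : NNeg N Q ≤ NNeg N b := nel_neg_antitone N hbQ
    have hdec : NNeg N Q ≤ NNeg N a ⊔ NNeg N R := (le_inf hnQa hnQb).trans hkey
    have hsplit : NNeg N Q = (NNeg N Q ⊓ NNeg N a) ⊔ (NNeg N Q ⊓ NNeg N R) := by
      rw [← inf_sup_left]
      exact (inf_eq_left.mpr hdec).symm
    have hnaQ : NNeg N a ≤ Q := by rw [hna]; exact inf_le_right.trans hyQ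
    calc NNeg N Q = (NNeg N Q ⊓ NNeg N a) ⊔ (NNeg N Q ⊓ NNeg N R) := hsplit
      _ ≤ Q ⊔ NNeg N R :=
          sup_le (le_sup_of_le_left (inf_le_right.trans hnaQ)) (le_sup_of_le_right inf_le_right)
  -- ∼b → ∼R = 1
  have hnbR : NImp N (NNeg N b) (NNeg N R) = NOne N := by
    have e : NNeg N b = NNeg N P ⊔ NNeg N Q := by rw [hbdef, nel_s4]
    rw [e]
    exact nel_orr N hPR hQR
  -- R ≤ b
  have hRle : R ≤ b := by
    have h1 : R ≤ NNeg N R ⊔ b := nel_le_of_imp N hRb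
    have h2 : NNeg N b ≤ b ⊔ NNeg N R := by
      have h := nel_le_of_imp N hnbR
      rwa [nel_s3] at h
    have h3 : R ⊓ NNeg N b ≤ b := by
      have h4 := nel_neg_antitone N h2
      rw [nel_s4', nel_s3, nel_s3] at h4
      exact (inf_comm R (NNeg N b)).le.trans h4
    have h5 : R ⊓ NNeg N R ≤ b := by
      have h6 : R ⊓ NNeg N R ≤ (R ⊓ NNeg N R ⊓ b) ⊔ (R ⊓ NNeg N R ⊓ NNeg N b) := by
        rw [← inf_sup_left]
        exact le_inf le_rfl (nel_s5 N R b)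
      refine h6.trans (sup_le inf_le_right ?_)
      exact (le_inf (inf_le_left.trans inf_le_left) inf_le_right).trans h3
    calc R = R ⊓ (NNeg N R ⊔ b) := (inf_eq_left.mpr h1).symm
      _ = (R ⊓ NNeg N R) ⊔ (R ⊓ b) := inf_sup_left _ _ _
      _ ≤ b := sup_le h5 inf_le_right
  have hRb' : R = b := le_antisymm hRle hbR
  rw [hRb']
  exact inf_eq_left.mpr hbS

end SynLemmas

theorem nelson_B7 {A : Type*} (N : NelsonAlgebra A) (x y : A) :
    N.wimp (N.neg (N.meet (N.neg x) y)) (N.wimp x y) = N.wimp x y := by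
  exact nel_main N x y
end

section
/- Let ⟨A,∧,↣,0⟩ be a Brignole algebra. Then for every x in A: ∼∼x = x, i.e., (x↣0)↣0 = x. -/
/-- A Brignole algebra ⟨A,∧,↣,0⟩ of type (2,2,0), with the abbreviations
∼x := x↣0 and x∨y := ((x↣0)∧(y↣0))↣0 written out in the axioms. -/
structure BrignoleAlgebra (A : Type*) where
  meet : A → A → A
  himp : A → A → A
  zero : A
  b1 : ∀ x y, himp (himp x x) y = y
  b2 : ∀ x y, meet (himp x y) y = y
  b3 : ∀ x y, meet x (himp (meet x (himp y zero)) zero) = meet x (himp x y)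
  b4 : ∀ x y z, himp x (meet y z) = meet (himp x y) (himp x z)
  b5 : ∀ x y, himp x y = himp (himp y zero) (himp x zero)
  b6 : ∀ x y z, himp x (himp x (himp y (himp y z))) =
    himp (meet x y) (himp (meet x y) z)
  b7 : ∀ x y, himp (himp (meet (himp x zero) y) zero) (himp x y) = himp x y
  b8 : ∀ x y, meet x (himp (meet (himp x zero) (himp y zero)) zero) = x
  b9 : ∀ x y z, meet x (himp (meet (himp y zero) (himp z zero)) zero) =
    himp (meet (himp (meet z x) zero) (himp (meet y x) zero)) zero
  b10 : ∀ x y, meet (meet x (himp x zero))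
      (himp (meet (himp y zero) (himp (himp y zero) zero)) zero) =
    meet x (himp x zero)

/-- The negation ∼x := x↣0. -/
def BrignoleAlgebra.neg {A : Type*} (B : BrignoleAlgebra A) (x : A) : A :=
  B.himp x B.zero

/-- The join x∨y := ((x↣0)∧(y↣0))↣0. -/
def BrignoleAlgebra.join {A : Type*} (B : BrignoleAlgebra A) (x y : A) : A :=
  B.himp (B.meet (B.himp x B.zero) (B.himp y B.zero)) B.zero

/-- The strong implication x→y := x↣(x↣y). -/
def BrignoleAlgebra.imp {A : Type*} (B : BrignoleAlgebra A) (x y : A) : A :=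
  B.himp x (B.himp x y)

/-- The unit 1 := 0↣0. -/
def BrignoleAlgebra.one {A : Type*} (B : BrignoleAlgebra A) : A :=
  B.himp B.zero B.zero

theorem brignole_neg_neg {A : Type*} (B : BrignoleAlgebra A) (x : A) :
    B.himp (B.himp x B.zero) B.zero = x := by
  have key : ∀ a b : A, B.himp a b =
      B.himp (B.himp (B.himp a B.zero) B.zero) (B.himp (B.himp b B.zero) B.zero) := by
    intro a b
    rw [B.b5 a b, B.b5]
  have h := key (B.himp B.zero B.zero) x
  simpa [B.b1] using h.symm
end

section
/- Let ⟨A,∧,↣,0⟩ be a Brignole algebra and define x→y:=x↣(x↣y). Then for all x,y in A: x∧(x→y) = x∧(∼x∨y), where ∼x:=x↣0 and x∨y:=((x↣0)∧(y↣0))↣0. -/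
namespace BrignoleAlgebra

variable {A : Type*} (B : BrignoleAlgebra A)

/-- ∼∼y = y. -/
theorem nn (y : A) : B.himp (B.himp y B.zero) B.zero = y := by
  have h1 : B.himp (B.himp B.zero B.zero) y = y := B.b1 B.zero y
  have h2 : B.himp (B.himp B.zero B.zero) B.zero = B.zero := B.b1 B.zero B.zero
  have h3 := B.b5 (B.himp B.zero B.zero) y
  rw [h1, h2] at h3
  exact h3.symm

/-- x↣x = 1. -/
theorem himp_self (x : A) : B.himp x x = B.himp B.zero B.zero := by
  have h1 : B.himp (B.himp x x) B.zero = B.zero := B.b1 x B.zero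
  have := B.nn (B.himp x x)
  rw [h1] at this
  exact this.symm

/-- x∧0 = 0. -/
theorem meet_zero (x : A) : B.meet x B.zero = B.zero := by
  have h1 := B.b2 (B.himp x B.zero) B.zero
  rwa [B.nn x] at h1

/-- 1∧y = y. -/
theorem one_meet (y : A) : B.meet (B.himp B.zero B.zero) y = y := by
  have := B.b2 y y
  rwa [B.himp_self y] at this

/-- x∧1 = x. -/
theorem meet_one (x : A) : B.meet x (B.himp B.zero B.zero) = x := by
  have h := B.b8 x (B.himp B.zero B.zero)
  rwa [B.b1 B.zero B.zero, B.b2 x B.zero] at h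

/-- commutativity of meet. -/
theorem meet_comm (a b : A) : B.meet a b = B.meet b a := by
  have key : ∀ y z : A, B.meet (B.himp y B.zero) (B.himp z B.zero)
      = B.meet (B.himp z B.zero) (B.himp y B.zero) := by
    intro y z
    have h := B.b9 (B.himp B.zero B.zero) y z
    rw [B.one_meet, B.meet_one, B.meet_one] at h
    have := congrArg (fun t => B.himp t B.zero) h
    rwa [B.nn, B.nn] at this
  have h := key (B.himp a B.zero) (B.himp b B.zero)
  rwa [B.nn a, B.nn b] at h

/-- ∼x ≤ x↣y : (x↣y)∧∼x = ∼x. -/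
theorem neg_le_himp (x y : A) :
    B.meet (B.himp x y) (B.himp x B.zero) = B.himp x B.zero := by
  have h := B.b2 (B.himp y B.zero) (B.himp x B.zero)
  rwa [← B.b5 x y] at h

/-- key: x∧∼(x↣y) = ∼(x↣y). -/
theorem meet_neg_himp (x y : A) :
    B.meet x (B.himp (B.himp x y) B.zero) = B.himp (B.himp x y) B.zero := by
  set u := B.himp x y with hu
  have h8 := B.b8 (B.himp u B.zero) x
  rw [B.nn u] at h8
  rw [B.neg_le_himp x y, B.nn x] at h8
  rw [B.meet_comm]
  exact h8

end BrignoleAlgebra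

theorem brignole_N7 {A : Type*} (B : BrignoleAlgebra A) (x y : A) :
    B.meet x (B.imp x y) = B.meet x (B.join (B.neg x) y) := by
  unfold BrignoleAlgebra.imp BrignoleAlgebra.join BrignoleAlgebra.neg
  rw [B.nn x]
  have h := B.b3 x (B.himp x y)
  rw [B.meet_neg_himp x y, B.nn (B.himp x y)] at h
  rw [← h]
  exact (B.b3 x y).symm
end

section
/- Let ⟨A,∧,↣,0⟩ be an algebra of type (2,2,0) satisfying axioms (B1), (B3), (B4), (B5), (B6), (B7), (B9) and (B10) (but not assuming (B2) or (B8)). Then ∧ is commutative: for all x,y in A, x∧y = y∧x. -/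
/-- An algebra ⟨A,∧,↣,0⟩ of type (2,2,0) satisfying the Brignole axioms
(B1), (B3), (B4), (B5), (B6), (B7), (B9) and (B10), but NOT assuming
(B2) or (B8).  The abbreviations ∼x := x↣0 and
x∨y := ((x↣0)∧(y↣0))↣0 are written out in the axioms. -/
structure BrignoleCore (A : Type*) where
  meet : A → A → A
  himp : A → A → A
  zero : A
  b1 : ∀ x y, himp (himp x x) y = y
  b3 : ∀ x y, meet x (himp (meet x (himp y zero)) zero) = meet x (himp x y)
  b4 : ∀ x y z, himp x (meet y z) = meet (himp x y) (himp x z)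
  b5 : ∀ x y, himp x y = himp (himp y zero) (himp x zero)
  b6 : ∀ x y z, himp x (himp x (himp y (himp y z))) =
    himp (meet x y) (himp (meet x y) z)
  b7 : ∀ x y, himp (himp (meet (himp x zero) y) zero) (himp x y) = himp x y
  b9 : ∀ x y z, meet x (himp (meet (himp y zero) (himp z zero)) zero) =
    himp (meet (himp (meet z x) zero) (himp (meet y x) zero)) zero
  b10 : ∀ x y, meet (meet x (himp x zero))
      (himp (meet (himp y zero) (himp (himp y zero) zero)) zero) =
    meet x (himp x zero)

namespace BrignoleCore

variable {A : Type*} (B : BrignoleCore A)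

/-- ∼∼y = y. -/
lemma inv (y : A) : B.himp (B.himp y B.zero) B.zero = y := by
  have h1 : ∀ t, B.himp (B.himp B.zero B.zero) t = t := fun t => B.b1 B.zero t
  -- y = 1→y = ∼y→∼1 = ∼y→0 = ∼∼y
  have h2 : B.himp (B.himp B.zero B.zero) y
      = B.himp (B.himp y B.zero) (B.himp (B.himp B.zero B.zero) B.zero) :=
    B.b5 (B.himp B.zero B.zero) y
  rw [h1, h1] at h2
  exact h2.symm

/-- 0∧0 = 0. -/
lemma zero_meet_zero : B.meet B.zero B.zero = B.zero := by
  have h := B.b7 (B.himp B.zero B.zero) B.zero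
  -- ∼(∼1∧0)→(1→0) = 1→0
  have h1 : ∀ t, B.himp (B.himp B.zero B.zero) t = t := fun t => B.b1 B.zero t
  rw [h1] at h
  -- h : ∼(0∧0)→0 = 0, i.e. ∼∼(0∧0) = 0
  have := B.inv (B.meet B.zero B.zero)
  rw [h] at this
  exact this.symm

/-- ∼x ∧ ∼x = ∼x. -/
lemma neg_meet_self (x : A) :
    B.meet (B.himp x B.zero) (B.himp x B.zero) = B.himp x B.zero := by
  have h := B.b4 x B.zero B.zero
  rw [B.zero_meet_zero] at h
  exact h.symm

/-- x ∧ x = x. -/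
lemma meet_self (x : A) : B.meet x x = x := by
  have h := B.neg_meet_self (B.himp x B.zero)
  rw [B.inv] at h
  exact h

end BrignoleCore

theorem brignoleCore_meet_comm {A : Type*} (B : BrignoleCore A) (x y : A) :
    B.meet x y = B.meet y x := by
  have h := B.b9 x y y
  rw [B.meet_self (B.himp y B.zero), B.inv,
      B.meet_self (B.himp (B.meet y x) B.zero), B.inv] at h
  exact h
end

section
/- Axiom (B1) is independent of the remaining Brignole axioms: there exists a three-element algebra ⟨A,∧,↣,0⟩ of type (2,2,0) that satisfies axioms (B2)–(B10) for all elements, but in which (B1) fails, i.e., there exist x,y in A with (x↣x)↣y ≠ y. (A witness is A={0,a,1} with ↣ given by 0↣0=0↣a=0↣1=1, a↣0=a↣a=a, a↣1=1, 1↣0=0, 1↣a=a, 1↣1=1, and ∧ the meet of the chain 0<a<1; here (a↣a)↣0=a≠0.) -/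
def bmeet : Fin 3 → Fin 3 → Fin 3 := fun x y => min x y
def bhimp : Fin 3 → Fin 3 → Fin 3
  | 0, _ => 2
  | 1, 0 => 1
  | 1, 1 => 1
  | 1, 2 => 2
  | 2, y => y

/-- Axiom (B1) is independent of the remaining Brignole axioms: there is a
three-element algebra ⟨A,∧,↣,0⟩ of type (2,2,0) satisfying (B2)–(B10) for all
elements, in which (B1) fails. -/
theorem brignole_b1_independent :
    ∃ (A : Type) (meet himp : A → A → A) (zero : A),
      Nat.card A = 3 ∧
      -- (B2)
      (∀ x y, meet (himp x y) y = y) ∧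
      -- (B3)
      (∀ x y, meet x (himp (meet x (himp y zero)) zero) = meet x (himp x y)) ∧
      -- (B4)
      (∀ x y z, himp x (meet y z) = meet (himp x y) (himp x z)) ∧
      -- (B5)
      (∀ x y, himp x y = himp (himp y zero) (himp x zero)) ∧
      -- (B6)
      (∀ x y z, himp x (himp x (himp y (himp y z))) =
        himp (meet x y) (himp (meet x y) z)) ∧
      -- (B7)
      (∀ x y, himp (himp (meet (himp x zero) y) zero) (himp x y) = himp x y) ∧
      -- (B8)
      (∀ x y, meet x (himp (meet (himp x zero) (himp y zero)) zero) = x) ∧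
      -- (B9)
      (∀ x y z, meet x (himp (meet (himp y zero) (himp z zero)) zero) =
        himp (meet (himp (meet z x) zero) (himp (meet y x) zero)) zero) ∧
      -- (B10)
      (∀ x y, meet (meet x (himp x zero))
          (himp (meet (himp y zero) (himp (himp y zero) zero)) zero) =
        meet x (himp x zero)) ∧
      -- (B1) fails
      (∃ x y, himp (himp x x) y ≠ y) := by
  refine ⟨Fin 3, bmeet, bhimp, 0, by simp, ?_, ?_, ?_, ?_, ?_, ?_, ?_, ?_, ?_, ⟨1, 0, by decide⟩⟩ <;> decide
end
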